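/- Let P be a closed subset of ℝ² with nonempty complement, and let x ∈ P be a point with Metric.infDist x (Pᶜ) ≥ Real.sqrt 2. Then x belongs to the interior of the union of all closed unit lattice squares contained in P, where a closed unit lattice square is a set of the form [m, m+1] × [k, k+1] with m, k integers. In particular, every point of P not in the interior of this union lies at distance less than √2 from the complement of P. -/
import Mathlib


/-- A point of the Euclidean plane is a *lattice point* if both its coordinates
are integers. -/
def IsLatticePoint (p : EuclideanSpace ℝ (Fin 2)) : Prop :=
  (∃ m : ℤ, p 0 = (m : ℝ)) ∧ (∃ k : ℤ, p 1 = (k : ℝ))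

/-- A *lattice polygonal region* is a finite union of closed triangles
(convex hulls of three-point sets) all of whose vertices are lattice points. -/
def IsLatticePolygonalRegion (P : Set (EuclideanSpace ℝ (Fin 2))) : Prop :=
  ∃ T : Finset (EuclideanSpace ℝ (Fin 2) × EuclideanSpace ℝ (Fin 2) × EuclideanSpace ℝ (Fin 2)),
    (∀ t ∈ T, IsLatticePoint t.1 ∧ IsLatticePoint t.2.1 ∧ IsLatticePoint t.2.2) ∧
    P = ⋃ t ∈ T, convexHull ℝ ({t.1, t.2.1, t.2.2} : Set (EuclideanSpace ℝ (Fin 2)))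

/-- The closed unit lattice square `[m, m+1] × [k, k+1]` (as a subset of the
Euclidean plane). -/
def UnitLatticeSquare (m k : ℤ) : Set (EuclideanSpace ℝ (Fin 2)) :=
  {p | p 0 ∈ Set.Icc (m : ℝ) (m + 1) ∧ p 1 ∈ Set.Icc (k : ℝ) (k + 1)}

/-- `L(P)`: the union of all closed unit lattice squares contained in `P`. -/
def LatticeSquareUnion (P : Set (EuclideanSpace ℝ (Fin 2))) :
    Set (EuclideanSpace ℝ (Fin 2)) :=
  ⋃ (m : ℤ) (k : ℤ) (_ : UnitLatticeSquare m k ⊆ P), UnitLatticeSquare m k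

/-- Supporting claim of Lemma `hausdorff`: a point of a closed set `P` at
distance at least `√2` from the complement of `P` lies in the interior of
`L(P)`; in particular every point of `P \ (L(P))°` is at distance less than
`√2` from `Pᶜ`. -/
noncomputable def floorGap (a : ℝ) : ℝ :=
  if (⌊a⌋ : ℝ) = a then 1/2 else min (a - ⌊a⌋) (⌊a⌋ + 1 - a)

lemma floorGap_pos (a : ℝ) : 0 < floorGap a := by
  unfold floorGap
  split_ifs with h
  · norm_num
  · have h1 : (⌊a⌋ : ℝ) ≤ a := Int.floor_le a
    have h2 : a < ⌊a⌋ + 1 := Int.lt_floor_add_one a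
    have h3 : (⌊a⌋ : ℝ) < a := lt_of_le_of_ne h1 h
    simp only [lt_min_iff]
    constructor <;> linarith

lemma floor_bracket {a b : ℝ} (h : |a - b| < floorGap a) :
    (⌊b⌋ : ℝ) ≤ a ∧ a ≤ ⌊b⌋ + 1 := by
  have hb1 : (⌊b⌋ : ℝ) ≤ b := Int.floor_le b
  have hb2 : b < ⌊b⌋ + 1 := Int.lt_floor_add_one b
  rw [abs_sub_lt_iff] at h
  unfold floorGap at h
  split_ifs at h with hint
  · obtain ⟨h1, h2⟩ := h
    have hlt : (⌊b⌋ : ℝ) < (⌊a⌋ : ℝ) + 1 := by linarith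
    have hlt' : ⌊b⌋ < ⌊a⌋ + 1 := by exact_mod_cast hlt
    have hle : (⌊b⌋ : ℝ) ≤ (⌊a⌋ : ℝ) := by exact_mod_cast (by omega : ⌊b⌋ ≤ ⌊a⌋)
    have hlt2 : (⌊a⌋ : ℝ) < (⌊b⌋ : ℝ) + 2 := by linarith
    have hlt2' : ⌊a⌋ < ⌊b⌋ + 2 := by exact_mod_cast hlt2
    have hle2 : (⌊a⌋ : ℝ) ≤ (⌊b⌋ : ℝ) + 1 := by exact_mod_cast (by omega : ⌊a⌋ ≤ ⌊b⌋ + 1)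
    exact ⟨by linarith [hint.le], by linarith [hint.ge]⟩
  · obtain ⟨h1, h2⟩ := h
    have h1' : a - b < a - ⌊a⌋ := lt_of_lt_of_le h1 (min_le_left _ _)
    have h2' : b - a < ⌊a⌋ + 1 - a := lt_of_lt_of_le h2 (min_le_right _ _)
    have heq : ⌊b⌋ = ⌊a⌋ := Int.floor_eq_iff.mpr ⟨by linarith, by push_cast; linarith⟩
    rw [heq]
    exact ⟨Int.floor_le a, (Int.lt_floor_add_one a).le⟩

lemma coord_dist_le (x y : EuclideanSpace ℝ (Fin 2)) (i : Fin 2) :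
    dist (x i) (y i) ≤ dist x y := by
  rw [EuclideanSpace.dist_eq]
  have h1 : dist (x i) (y i) ^ 2 ≤ ∑ j, dist (x j) (y j) ^ 2 :=
    Finset.single_le_sum (f := fun j => dist (x j) (y j) ^ 2)
      (fun j _ => sq_nonneg _) (Finset.mem_univ i)
  calc dist (x i) (y i) = Real.sqrt (dist (x i) (y i) ^ 2) :=
        (Real.sqrt_sq dist_nonneg).symm
    _ ≤ _ := Real.sqrt_le_sqrt h1

lemma square_subset_ball {m k : ℤ} {x : EuclideanSpace ℝ (Fin 2)}
    (hx : x ∈ UnitLatticeSquare m k) :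
    UnitLatticeSquare m k ⊆ Metric.closedBall x (Real.sqrt 2) := by
  intro z hz
  obtain ⟨⟨hx0, hx0'⟩, hx1, hx1'⟩ := hx
  obtain ⟨⟨hz0, hz0'⟩, hz1, hz1'⟩ := hz
  rw [Metric.mem_closedBall, EuclideanSpace.dist_eq]
  apply Real.sqrt_le_sqrt
  rw [Fin.sum_univ_two]
  have d0 : dist (z 0) (x 0) ≤ 1 := by
    rw [Real.dist_eq, abs_le]; constructor <;> linarith
  have d1 : dist (z 1) (x 1) ≤ 1 := by
    rw [Real.dist_eq, abs_le]; constructor <;> linarith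
  nlinarith [dist_nonneg (x := z 0) (y := x 0), dist_nonneg (x := z 1) (y := x 1)]

theorem far_point_mem_interior_latticeSquareUnion
    (P : Set (EuclideanSpace ℝ (Fin 2))) (hP : IsClosed P)
    (hPc : (Pᶜ).Nonempty) :
    (∀ x ∈ P, Real.sqrt 2 ≤ Metric.infDist x (Pᶜ) →
      x ∈ interior (LatticeSquareUnion P)) ∧
    (∀ y ∈ P, y ∉ interior (LatticeSquareUnion P) →
      Metric.infDist y (Pᶜ) < Real.sqrt 2) := by
  have sqrt2_pos : (0 : ℝ) < Real.sqrt 2 := Real.sqrt_pos.mpr (by norm_num)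
  have main : ∀ x ∈ P, Real.sqrt 2 ≤ Metric.infDist x (Pᶜ) →
      x ∈ interior (LatticeSquareUnion P) := by
    intro x _ hdist
    -- the closed ball of radius √2 around x is contained in P
    have hball : Metric.closedBall x (Real.sqrt 2) ⊆ P := by
      have h1 : Metric.ball x (Real.sqrt 2) ⊆ P := by
        intro z hz
        by_contra hzc
        have h2 : Metric.infDist x (Pᶜ) ≤ dist x z :=
          Metric.infDist_le_dist_of_mem hzc
        rw [Metric.mem_ball, dist_comm] at hz
        linarith [le_trans hdist h2]
      rw [← closure_ball x (ne_of_gt sqrt2_pos), ← hP.closure_eq]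
      exact closure_mono h1
    -- neighborhood radius
    set ε := min (floorGap (x 0)) (floorGap (x 1)) with hε
    have hεpos : 0 < ε := lt_min (floorGap_pos _) (floorGap_pos _)
    rw [mem_interior]
    refine ⟨Metric.ball x ε, ?_, Metric.isOpen_ball, Metric.mem_ball_self hεpos⟩
    intro y hy
    rw [Metric.mem_ball, dist_comm] at hy
    have hc0 : |x 0 - y 0| < floorGap (x 0) := by
      have := coord_dist_le x y 0
      rw [Real.dist_eq] at this
      exact lt_of_le_of_lt this (lt_of_lt_of_le hy (min_le_left _ _))
    have hc1 : |x 1 - y 1| < floorGap (x 1) := by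
      have := coord_dist_le x y 1
      rw [Real.dist_eq] at this
      exact lt_of_le_of_lt this (lt_of_lt_of_le hy (min_le_right _ _))
    obtain ⟨hx0, hx0'⟩ := floor_bracket hc0
    obtain ⟨hx1, hx1'⟩ := floor_bracket hc1
    have hxmem : x ∈ UnitLatticeSquare ⌊y 0⌋ ⌊y 1⌋ :=
      ⟨⟨hx0, hx0'⟩, hx1, hx1'⟩
    have hymem : y ∈ UnitLatticeSquare ⌊y 0⌋ ⌊y 1⌋ :=
      ⟨⟨Int.floor_le _, (Int.lt_floor_add_one _).le⟩,
        Int.floor_le _, (Int.lt_floor_add_one _).le⟩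
    have hsub : UnitLatticeSquare ⌊y 0⌋ ⌊y 1⌋ ⊆ P :=
      (square_subset_ball hxmem).trans hball
    simp only [LatticeSquareUnion, Set.mem_iUnion]
    exact ⟨⌊y 0⌋, ⌊y 1⌋, hsub, hymem⟩
  refine ⟨main, fun y hy hnot => ?_⟩
  by_contra h
  push_neg at h
  exact hnot (main y hy h)
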